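/- Let M be a von Neumann algebra on a complex Hilbert space H, let J be a conjugation of H with J γ₀ = γ₀ for a fixed γ₀ ∈ H, and assume J M J ⊆ M' (i.e., j(a) ∈ M' for every a ∈ M). Let u ∈ M satisfy ((star u) ∘ u) γ₀ = γ₀. Then the vectors u(J(u γ₀)) and u γ₀ define the same vector functional on M: for every x ∈ M, ⟪u(J(u γ₀)), x (u(J(u γ₀)))⟫ = ⟪u γ₀, x (u γ₀)⟫. (Lemma 6.6(i): E(u·j(u)·γ₀) = E(u γ₀).) -/

import Mathlib

/-- Lemma 6.6(i): E(u·j(u)·γ₀) = E(u γ₀) on M, for u ∈ M with (u*u)γ₀ = γ₀,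
where J is a conjugation fixing γ₀ and j(a) = J a J ∈ M' for a ∈ M. -/
theorem stmt11 {H : Type*} [NormedAddCommGroup H] [InnerProductSpace ℂ H]
    [CompleteSpace H]
    (M : VonNeumannAlgebra H) (γ₀ : H) (J : H → H)
    (hJadd : ∀ ξ η : H, J (ξ + η) = J ξ + J η)
    (hJsmul : ∀ (c : ℂ) (ξ : H), J (c • ξ) = (starRingEnd ℂ c) • J ξ)
    (hJnorm : ∀ ξ : H, ‖J ξ‖ = ‖ξ‖)
    (hJinv : ∀ ξ : H, J (J ξ) = ξ)
    (hJγ₀ : J γ₀ = γ₀)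
    (j : (H →L[ℂ] H) → (H →L[ℂ] H))
    (hj : ∀ (a : H →L[ℂ] H) (ξ : H), j a ξ = J (a (J ξ)))
    (hjM : ∀ a : H →L[ℂ] H, a ∈ M → j a ∈ M.commutant)
    (u : H →L[ℂ] H) (hu : u ∈ M)
    (huγ : (star u * u) γ₀ = γ₀) :
    ∀ x : H →L[ℂ] H, x ∈ M →
      (inner ℂ (u (J (u γ₀))) (x (u (J (u γ₀)))) : ℂ) =
        inner ℂ (u γ₀) (x (u γ₀)) := by
  -- J is anti-unitary
  have hJsub : ∀ ξ η : H, J (ξ - η) = J ξ - J η := by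
    intro ξ η
    have := hJsmul (-1) η
    simp only [neg_smul, one_smul, map_neg, map_one] at this
    rw [sub_eq_add_neg, hJadd, this, sub_eq_add_neg]
  have hJi : ∀ ξ η : H, (inner ℂ (J ξ) (J η) : ℂ) = inner ℂ η ξ := by
    intro ξ η
    rw [inner_eq_sum_norm_sq_div_four, inner_eq_sum_norm_sq_div_four]
    have h1 : ‖J ξ + J η‖ = ‖η + ξ‖ := by rw [← hJadd, hJnorm, add_comm]
    have h2 : ‖J ξ - J η‖ = ‖η - ξ‖ := by rw [← hJsub, hJnorm, norm_sub_rev]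
    have h3 : ‖J ξ - Complex.I • J η‖ = ‖η - Complex.I • ξ‖ := by
      have : J ξ - Complex.I • J η = J (ξ + Complex.I • η) := by
        rw [hJadd, hJsmul]; simp [Complex.conj_I, sub_eq_add_neg]
      rw [this, hJnorm]
      have : (-Complex.I) • (ξ + Complex.I • η) = η - Complex.I • ξ := by
        rw [smul_add, smul_smul]
        simp [Complex.I_mul_I]
        abel
      rw [← this, norm_smul]; simp
    have h4 : ‖J ξ + Complex.I • J η‖ = ‖η + Complex.I • ξ‖ := by
      have : J ξ + Complex.I • J η = J (ξ - Complex.I • η) := by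
        rw [hJsub, hJsmul]; simp [Complex.conj_I, sub_eq_add_neg]
      rw [this, hJnorm]
      have : Complex.I • (ξ - Complex.I • η) = η + Complex.I • ξ := by
        rw [smul_sub, smul_smul]
        simp [Complex.I_mul_I]
        abel
      rw [← this, norm_smul]; simp
    simp only [RCLike.I_to_complex]
    rw [h1, h2, h3, h4]
  -- adjoint relation: ⟪j a ξ, η⟫ = ⟪ξ, j (star a) η⟫
  have hadj : ∀ (a : H →L[ℂ] H) (ξ η : H),
      (inner ℂ (j a ξ) η : ℂ) = inner ℂ ξ (j (star a) η) := by
    intro a ξ η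
    rw [hj, hj]
    calc (inner ℂ (J (a (J ξ))) η : ℂ)
        = inner ℂ (J (a (J ξ))) (J (J η)) := by rw [hJinv]
      _ = inner ℂ (J η) (a (J ξ)) := hJi _ _
      _ = inner ℂ ((star a) (J η)) (J ξ) := by
          rw [ContinuousLinearMap.star_eq_adjoint, ContinuousLinearMap.adjoint_inner_left]
      _ = inner ℂ (J (J ((star a) (J η)))) (J ξ) := by rw [hJinv]
      _ = inner ℂ ξ (J ((star a) (J η))) := hJi _ _
  intro x hx
  set v := j u with hv
  set w := j (star u) with hw
  have hvM : v ∈ M.commutant := hjM u hu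
  have hwM : w ∈ M.commutant := hjM (star u) (star_mem hu)
  have huv : ∀ ξ, u (v ξ) = v (u ξ) := fun ξ => by
    have := congrFun (congrArg DFunLike.coe
      (VonNeumannAlgebra.mem_commutant_iff.mp hvM u hu)) ξ; simpa using this
  have huw : ∀ ξ, u (w ξ) = w (u ξ) := fun ξ => by
    have := congrFun (congrArg DFunLike.coe
      (VonNeumannAlgebra.mem_commutant_iff.mp hwM u hu)) ξ; simpa using this
  have hxw : ∀ ξ, x (w ξ) = w (x ξ) := fun ξ => by
    have := congrFun (congrArg DFunLike.coe
      (VonNeumannAlgebra.mem_commutant_iff.mp hwM x hx)) ξ; simpa using this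
  have hvγ : v γ₀ = J (u γ₀) := by rw [hv, hj, hJγ₀]
  have hwv : w (v γ₀) = γ₀ := by
    rw [hvγ, hw, hj, hJinv, ← ContinuousLinearMap.mul_apply, huγ, hJγ₀]
  calc (inner ℂ (u (J (u γ₀))) (x (u (J (u γ₀)))) : ℂ)
      = inner ℂ (v (u γ₀)) (x (u (v γ₀))) := by rw [← hvγ, huv]
    _ = inner ℂ (u γ₀) (w (x (u (v γ₀)))) := hadj u _ _
    _ = inner ℂ (u γ₀) (x (u (w (v γ₀)))) := by rw [← hxw, ← huw]
    _ = inner ℂ (u γ₀) (x (u γ₀)) := by rw [hwv]
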